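/- If all vertices are modified, i.e., I = {1,…,n}, then the total number of chips in the unique final configuration of the Modified Kostant Game equals the sum of the heights of all positive coroots of Φ: |c_final| = Σ_{γ^∨ ∈ (Φ^∨)^+} ht(γ^∨), where ht(Σ_j k_j α_j^∨) = Σ_j k_j. -/

import Mathlib

open scoped Classical RealInnerProductSpace

noncomputable section

variable {n d : ℕ}

/-- The pairing `⟨β, γ^∨⟩ = 2(β,γ)/(γ,γ)` of a vector with a coroot. -/
def rsPair (β γ : EuclideanSpace ℝ (Fin d)) : ℝ := 2 * ⟪β, γ⟫ / ⟪γ, γ⟫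

/-- The coroot `γ^∨ = 2γ/(γ,γ)`. -/
def rsCoroot (γ : EuclideanSpace ℝ (Fin d)) : EuclideanSpace ℝ (Fin d) :=
  (2 / ⟪γ, γ⟫) • γ

/-- `⟨·, γ^∨⟩` as a linear functional. -/
def corootForm (γ : EuclideanSpace ℝ (Fin d)) : EuclideanSpace ℝ (Fin d) →ₗ[ℝ] ℝ where
  toFun x := 2 * ⟪x, γ⟫ / ⟪γ, γ⟫
  map_add' x y := by simp only [inner_add_left]; ring
  map_smul' c x := by simp only [real_inner_smul_left, RingHom.id_apply, smul_eq_mul]; ring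

/-- A finite reduced crystallographic root system in the Euclidean space `ℝ^d`, together with a
chosen base of simple roots `α 0, …, α (n-1)`: every root is an integral linear combination of
the simple roots with all coefficients nonnegative or all nonpositive. -/
structure RootSystemBase (n d : ℕ) : Type where
  Φ : Finset (EuclideanSpace ℝ (Fin d))
  α : Fin n → EuclideanSpace ℝ (Fin d)
  α_mem : ∀ i, α i ∈ Φ
  nonzero : ∀ β ∈ Φ, β ≠ 0
  reduced : ∀ β ∈ Φ, ∀ t : ℝ, t • β ∈ Φ → t = 1 ∨ t = -1
  crystallographic : ∀ β ∈ Φ, ∀ γ ∈ Φ, ∃ k : ℤ, rsPair β γ = (k : ℝ)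
  reflClosed : ∀ β ∈ Φ, ∀ γ ∈ Φ, β - rsPair β γ • γ ∈ Φ
  indep : LinearIndependent ℝ α
  base : ∀ β ∈ Φ, ∃ c : Fin n → ℤ,
    β = ∑ i, (c i : ℝ) • α i ∧ ((∀ i, 0 ≤ c i) ∨ (∀ i, c i ≤ 0))

/-- The extended space `E' = E ⊕ ℝ^I`. -/
abbrev ExtSp (n d : ℕ) (I : Finset (Fin n)) : Type :=
  EuclideanSpace ℝ (Fin d) × ({p : Fin n // p ∈ I} → ℝ)

/-- The total source vector `β = ∑_{p ∈ I} β_p` in the extended space. -/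
def betaVec (n d : ℕ) (I : Finset (Fin n)) : ExtSp n d I := (0, fun _ => 1)

namespace RootSystemBase

variable (R : RootSystemBase n d)

lemma alpha_ne_zero (i : Fin n) : R.α i ≠ 0 := R.nonzero _ (R.α_mem i)

lemma inner_alpha_ne_zero (i : Fin n) : ⟪R.α i, R.α i⟫ ≠ 0 := fun h =>
  R.alpha_ne_zero i ((inner_self_eq_zero (𝕜 := ℝ)).mp h)

lemma corootForm_alpha_self (i : Fin n) : corootForm (R.α i) (R.α i) = 2 := by
  have h2 := R.inner_alpha_ne_zero i
  show 2 * ⟪R.α i, R.α i⟫ / ⟪R.α i, R.α i⟫ = 2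
  rw [mul_div_assoc, div_self h2, mul_one]

/-- The simple reflection `s_i : x ↦ x - ⟨x, α_i^∨⟩ α_i` as a linear automorphism of `E`. -/
def sRefl (i : Fin n) :
    EuclideanSpace ℝ (Fin d) ≃ₗ[ℝ] EuclideanSpace ℝ (Fin d) :=
  Module.reflection (R.corootForm_alpha_self i)

/-- The Weyl group `W`, as the subgroup of linear automorphisms of `E` generated by the
simple reflections. -/
def weyl : Subgroup (EuclideanSpace ℝ (Fin d) ≃ₗ[ℝ] EuclideanSpace ℝ (Fin d)) :=
  Subgroup.closure (Set.range R.sRefl)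

/-- `wordProd [i₁, …, i_t] = s_{i₁} ⋯ s_{i_t}`. -/
def wordProd (l : List (Fin n)) :
    EuclideanSpace ℝ (Fin d) ≃ₗ[ℝ] EuclideanSpace ℝ (Fin d) :=
  (l.map R.sRefl).prod

/-- The Weyl group element `s_{i_t} ⋯ s_{i_1}` associated to the firing sequence
`(i_1, …, i_t)`. -/
def seqProd (l : List (Fin n)) :
    EuclideanSpace ℝ (Fin d) ≃ₗ[ℝ] EuclideanSpace ℝ (Fin d) :=
  (l.reverse.map R.sRefl).prod

/-- The length function `ℓ` of the Coxeter system `(W, S)`: the minimal number of simple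
reflections needed to express `w`. -/
def len (w : EuclideanSpace ℝ (Fin d) ≃ₗ[ℝ] EuclideanSpace ℝ (Fin d)) : ℕ :=
  sInf {t | ∃ l : List (Fin n), l.length = t ∧ R.wordProd l = w}

/-- The set `W^J` of minimal length representatives of `W/W_J`, for `J = S \ {s_i : i ∈ I}`:
those `w ∈ W` with `ℓ(w s_j) > ℓ(w)` for all `j ∉ I`. -/
def minReps (I : Finset (Fin n)) :
    Set (EuclideanSpace ℝ (Fin d) ≃ₗ[ℝ] EuclideanSpace ℝ (Fin d)) :=
  {w | w ∈ R.weyl ∧ ∀ j, j ∉ I → R.len w < R.len (w * R.sRefl j)}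

/-- The Cartan matrix `a_{uv} = ⟨α_u, α_v^∨⟩` (an integer by crystallinity). -/
def cartan (u v : Fin n) : ℤ := ⌊rsPair (R.α u) (R.α v)⌋

/-- The set `Φ⁺` of positive roots. -/
def posRoots : Finset (EuclideanSpace ℝ (Fin d)) :=
  R.Φ.filter fun β => ∃ c : Fin n → ℤ, β = ∑ i, (c i : ℝ) • R.α i ∧ ∀ i, 0 ≤ c i

/-- The set `Φ_P⁺` of positive roots lying in the span of the simple roots `α_j`, `j ∈ P`. -/
def parPos (P : Finset (Fin n)) : Finset (EuclideanSpace ℝ (Fin d)) :=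
  R.posRoots.filter fun β => β ∈ Submodule.span ℝ (R.α '' (P : Set (Fin n)))

/-- `∑_{u ≠ v} (−a_{uv}) c_u + [v ∈ I]`. -/
def chipBound (I : Finset (Fin n)) (c : Fin n → ℤ) (v : Fin n) : ℤ :=
  (∑ u ∈ Finset.univ.erase v, -(R.cartan u v) * c u) + (if v ∈ I then 1 else 0)

/-- Vertex `v` is sad in the configuration `c` (Modified Kostant Game with active set `I`). -/
def Sad (I : Finset (Fin n)) (c : Fin n → ℤ) (v : Fin n) : Prop :=
  2 * c v < R.chipBound I c v

/-- Firing vertex `v`. -/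
def fire (I : Finset (Fin n)) (c : Fin n → ℤ) (v : Fin n) : Fin n → ℤ :=
  Function.update c v (R.chipBound I c v - c v)

end RootSystemBase

/-- `ValidFrom R I c l`: starting from the configuration `c`, the sequence `l` fires a sad
vertex at each step. -/
def RootSystemBase.ValidFrom (R : RootSystemBase n d) (I : Finset (Fin n)) :
    (Fin n → ℤ) → List (Fin n) → Prop
  | _, [] => True
  | c, v :: l => R.Sad I c v ∧ RootSystemBase.ValidFrom R I (R.fire I c v) l

namespace RootSystemBase

variable (R : RootSystemBase n d)

/-- A valid firing sequence: starts at the zero configuration and fires a sad vertex at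
each step. -/
def Valid (I : Finset (Fin n)) (l : List (Fin n)) : Prop := R.ValidFrom I 0 l

/-- The configuration reached after playing the sequence `l` from the zero configuration. -/
def play (I : Finset (Fin n)) (l : List (Fin n)) : Fin n → ℤ :=
  l.foldl (R.fire I) 0

/-- A maximal valid firing sequence: no vertex is sad in the final configuration. -/
def MaximalSeq (I : Finset (Fin n)) (l : List (Fin n)) : Prop :=
  R.Valid I l ∧ ∀ v, ¬ R.Sad I (R.play I l) v

/-- The (integer) coefficients of a vector in the basis of simple coroots, when they exist. -/
def corootCoeffs (x : EuclideanSpace ℝ (Fin d)) : Fin n → ℤ :=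
  if h : ∃ k : Fin n → ℤ, x = ∑ j, (k j : ℝ) • rsCoroot (R.α j) then h.choose else 0

/-- The `I`-height of a (co)vector: the sum over `j ∈ I` of its coefficients in the basis
of simple coroots. -/
def htI (I : Finset (Fin n)) (x : EuclideanSpace ℝ (Fin d)) : ℤ :=
  ∑ j ∈ I, R.corootCoeffs x j

end RootSystemBase

/-- The extended pairing `⟨·, α_i^∨⟩` on `E' = E ⊕ ℝ^I`, determined by
`⟨β_p, α_i^∨⟩ = −δ_{pi}`, as a linear functional. -/
def extForm (R : RootSystemBase n d) (I : Finset (Fin n)) (i : Fin n) :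
    ExtSp n d I →ₗ[ℝ] ℝ :=
  (corootForm (R.α i)).comp (LinearMap.fst ℝ _ _) -
    (if h : i ∈ I then
      (LinearMap.proj (R := ℝ) (φ := fun _ : {p : Fin n // p ∈ I} => ℝ) ⟨i, h⟩).comp
        (LinearMap.snd ℝ _ _)
    else 0)

namespace RootSystemBase

variable (R : RootSystemBase n d)

lemma extForm_apply (I : Finset (Fin n)) (i : Fin n) (x : ExtSp n d I) :
    extForm R I i x = corootForm (R.α i) x.1 - (if h : i ∈ I then x.2 ⟨i, h⟩ else 0) := by
  by_cases h : i ∈ I <;> simp [extForm, h]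

lemma extForm_alpha (I : Finset (Fin n)) (i : Fin n) :
    extForm R I i ((R.α i, 0) : ExtSp n d I) = 2 := by
  rw [R.extForm_apply]
  simp [R.corootForm_alpha_self i]

/-- The simple reflection `s_i : x ↦ x − ⟨x, α_i^∨⟩ α_i` on the extended space `E'`. -/
def extRefl (I : Finset (Fin n)) (i : Fin n) : ExtSp n d I ≃ₗ[ℝ] ExtSp n d I :=
  Module.reflection (R.extForm_alpha I i)

/-- The extended pairing `⟨x, α_i^∨⟩` for `x ∈ E'`. -/
def extPair (I : Finset (Fin n)) (x : ExtSp n d I) (i : Fin n) : ℝ := extForm R I i x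

/-- The action of `s_{i_t} ⋯ s_{i_1}` on the extended space `E'`. -/
def extSeqProd (I : Finset (Fin n)) (l : List (Fin n)) : ExtSp n d I ≃ₗ[ℝ] ExtSp n d I :=
  (l.reverse.map (R.extRefl I)).prod

end RootSystemBase
namespace RootSystemBase

variable {n d : ℕ} (R : RootSystemBase n d)

lemma rsPair_self {γ : EuclideanSpace ℝ (Fin d)} (h : γ ≠ 0) : rsPair γ γ = 2 := by
  have h2 : ⟪γ, γ⟫ ≠ 0 := fun hh => h ((inner_self_eq_zero (𝕜 := ℝ)).mp hh)
  unfold rsPair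
  rw [mul_div_assoc, div_self h2, mul_one]

lemma corootForm_apply' (γ x : EuclideanSpace ℝ (Fin d)) :
    corootForm γ x = rsPair x γ := rfl

lemma inner_self_pos_of_mem {β : EuclideanSpace ℝ (Fin d)} (hβ : β ∈ R.Φ) :
    (0:ℝ) < ⟪β, β⟫ :=
  lt_of_le_of_ne real_inner_self_nonneg
    (fun h => R.nonzero β hβ ((inner_self_eq_zero (𝕜 := ℝ)).mp h.symm))

lemma sRefl_apply (i : Fin n) (x : EuclideanSpace ℝ (Fin d)) :
    R.sRefl i x = x - rsPair x (R.α i) • R.α i := by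
  unfold sRefl
  rw [Module.reflection_apply]
  rfl

lemma sRefl_sRefl (i : Fin n) (x : EuclideanSpace ℝ (Fin d)) :
    R.sRefl i (R.sRefl i x) = x :=
  Module.involutive_reflection (R.corootForm_alpha_self i) x

lemma sRefl_alpha_self (i : Fin n) : R.sRefl i (R.α i) = - R.α i :=
  Module.reflection_apply_self _

lemma inner_sRefl (i : Fin n) (x y : EuclideanSpace ℝ (Fin d)) :
    ⟪R.sRefl i x, R.sRefl i y⟫ = ⟪x, y⟫ := by
  have h2 : ⟪R.α i, R.α i⟫ ≠ 0 := R.inner_alpha_ne_zero i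
  simp only [sRefl_apply, rsPair, inner_sub_left, inner_sub_right, real_inner_smul_left,
    real_inner_smul_right]
  rw [real_inner_comm (R.α i) y]
  set t : ℝ := ⟪R.α i, R.α i⟫ with ht
  set a : ℝ := ⟪x, R.α i⟫ with ha
  set b : ℝ := ⟪y, R.α i⟫ with hb
  field_simp
  ring

lemma sRefl_mem (i : Fin n) {β : EuclideanSpace ℝ (Fin d)} (hβ : β ∈ R.Φ) :
    R.sRefl i β ∈ R.Φ := by
  rw [R.sRefl_apply]
  exact R.reflClosed β hβ (R.α i) (R.α_mem i)

lemma neg_mem {β : EuclideanSpace ℝ (Fin d)} (hβ : β ∈ R.Φ) : -β ∈ R.Φ := by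
  have h := R.reflClosed β hβ β hβ
  rwa [rsPair_self (R.nonzero β hβ), two_smul, sub_add_eq_sub_sub, sub_self, zero_sub] at h

lemma coeff_unique {c c' : Fin n → ℝ}
    (h : ∑ i, c i • R.α i = ∑ i, c' i • R.α i) : c = c' := by
  have h0 : ∑ i, (c i - c' i) • R.α i = 0 := by
    simp only [sub_smul, Finset.sum_sub_distrib, h, sub_self]
  have h1 := Fintype.linearIndependent_iff.1 R.indep (fun i => c i - c' i) h0
  funext i
  have h2 : c i - c' i = 0 := h1 i
  linarith

lemma coeff_unique_int {c c' : Fin n → ℤ}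
    (h : ∑ i, (c i : ℝ) • R.α i = ∑ i, (c' i : ℝ) • R.α i) : c = c' := by
  have := R.coeff_unique h
  funext i
  exact_mod_cast congrFun this i

lemma mem_posRoots {β : EuclideanSpace ℝ (Fin d)} :
    β ∈ R.posRoots ↔ β ∈ R.Φ ∧
      ∃ c : Fin n → ℤ, β = ∑ i, (c i : ℝ) • R.α i ∧ ∀ i, 0 ≤ c i := by
  unfold posRoots
  exact Finset.mem_filter

lemma alpha_mem_posRoots (i : Fin n) : R.α i ∈ R.posRoots := by
  rw [R.mem_posRoots]
  refine ⟨R.α_mem i, fun j => if j = i then 1 else 0, ?_, ?_⟩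
  · rw [Finset.sum_eq_single i] <;> simp +contextual
  · intro j
    show (0:ℤ) ≤ if j = i then 1 else 0
    split <;> simp

lemma posRoots_subset : R.posRoots ⊆ R.Φ := Finset.filter_subset _ _

lemma pos_or_neg {β : EuclideanSpace ℝ (Fin d)} (hβ : β ∈ R.Φ) :
    β ∈ R.posRoots ∨ -β ∈ R.posRoots := by
  obtain ⟨c, hc, hsign⟩ := R.base β hβ
  rcases hsign with hs | hs
  · exact Or.inl (R.mem_posRoots.2 ⟨hβ, c, hc, hs⟩)
  · refine Or.inr (R.mem_posRoots.2 ⟨R.neg_mem hβ, fun i => -c i, ?_, fun i => ?_⟩)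
    · rw [hc]
      push_cast
      simp [neg_smul, Finset.sum_neg_distrib]
    · show (0:ℤ) ≤ -c i
      linarith [hs i]

lemma not_pos_and_neg {β : EuclideanSpace ℝ (Fin d)}
    (h1 : β ∈ R.posRoots) (h2 : -β ∈ R.posRoots) : False := by
  obtain ⟨hβ, c, hc, hcpos⟩ := R.mem_posRoots.1 h1
  obtain ⟨hβ', c', hc', hcpos'⟩ := R.mem_posRoots.1 h2
  have h0 : ∑ i, ((c i + c' i : ℤ) : ℝ) • R.α i = ∑ i, ((0:ℤ):ℝ) • R.α i := by
    push_cast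
    simp only [add_smul, Finset.sum_add_distrib, ← hc, ← hc']
    simp
  have hcc := R.coeff_unique_int h0
  have hz : ∀ i, c i = 0 := by
    intro i
    have h3 : c i + c' i = 0 := congrFun hcc i
    linarith [hcpos i, hcpos' i]
  apply R.nonzero β hβ
  rw [hc]
  simp [hz]

end RootSystemBase
namespace RootSystemBase

variable {n d : ℕ} (R : RootSystemBase n d)

/-- The half-sum of positive roots. -/
def rho : EuclideanSpace ℝ (Fin d) := (2:ℝ)⁻¹ • ∑ γ ∈ R.posRoots, γ

lemma sRefl_mem_posRoots (v : Fin n) {β : EuclideanSpace ℝ (Fin d)}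
    (hβ : β ∈ R.posRoots) (hne : β ≠ R.α v) : R.sRefl v β ∈ R.posRoots := by
  obtain ⟨hβΦ, c, hc, hcpos⟩ := R.mem_posRoots.1 hβ
  obtain ⟨k, hk⟩ := R.crystallographic β hβΦ (R.α v) (R.α_mem v)
  have hsmem : R.sRefl v β ∈ R.Φ := R.sRefl_mem v hβΦ
  -- coefficients of the reflected root
  have hrep : R.sRefl v β = ∑ i, ((c i - if i = v then k else 0 : ℤ) : ℝ) • R.α i := by
    rw [R.sRefl_apply, hk, hc]
    push_cast
    simp only [sub_smul, Finset.sum_sub_distrib]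
    congr 1
    rw [Finset.sum_eq_single v]
    · simp
    · intro b _ hb; simp [hb]
    · simp
  obtain ⟨e, he, hesign⟩ := R.base _ hsmem
  have hce : e = fun i => c i - if i = v then k else 0 := by
    apply R.coeff_unique_int
    rw [← he, ← hrep]
  rcases hesign with hp | hneg
  · exact R.mem_posRoots.2 ⟨hsmem, e, he, hp⟩
  · -- all coefficients nonpositive : impossible
    exfalso
    have hzero : ∀ i, i ≠ v → c i = 0 := by
      intro i hi
      have h1 := hneg i
      rw [hce] at h1
      simp only [if_neg hi] at h1
      have := hcpos i
      omega
    -- β = c v • α v, so by reducedness c v = 1 and β = α v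
    have hβv : β = ((c v : ℝ)) • R.α v := by
      rw [hc, Finset.sum_eq_single v]
      · intro b _ hb; simp [hzero b hb]
      · simp
    have := R.reduced (R.α v) (R.α_mem v) (c v) (by rw [← hβv]; exact hβΦ)
    rcases this with h1 | h1
    · apply hne
      rw [hβv, h1, one_smul]
    · have : (0:ℝ) ≤ (c v : ℝ) := by exact_mod_cast hcpos v
      rw [h1] at this
      norm_num at this

lemma sRefl_mem_erase (v : Fin n) {β : EuclideanSpace ℝ (Fin d)}
    (hβ : β ∈ R.posRoots.erase (R.α v)) : R.sRefl v β ∈ R.posRoots.erase (R.α v) := by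
  obtain ⟨hne, hβp⟩ := Finset.mem_erase.1 hβ
  refine Finset.mem_erase.2 ⟨?_, R.sRefl_mem_posRoots v hβp hne⟩
  intro h
  have : β = R.sRefl v (R.α v) := by rw [← h, R.sRefl_sRefl]
  rw [R.sRefl_alpha_self] at this
  subst this
  exact R.not_pos_and_neg hβp (by simpa using R.alpha_mem_posRoots v)

lemma sum_erase_sRefl {M : Type*} [AddCommMonoid M] (v : Fin n)
    (g : EuclideanSpace ℝ (Fin d) → M) :
    ∑ γ ∈ R.posRoots.erase (R.α v), g (R.sRefl v γ)
      = ∑ γ ∈ R.posRoots.erase (R.α v), g γ := by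
  apply Finset.sum_nbij' (fun γ => R.sRefl v γ) (fun γ => R.sRefl v γ)
  · intro γ hγ; exact R.sRefl_mem_erase v hγ
  · intro γ hγ; exact R.sRefl_mem_erase v hγ
  · intro γ _; exact R.sRefl_sRefl v γ
  · intro γ _; exact R.sRefl_sRefl v γ
  · intro γ _; rfl

lemma sRefl_sum_posRoots (v : Fin n) :
    R.sRefl v (∑ γ ∈ R.posRoots, γ) = (∑ γ ∈ R.posRoots, γ) - (2:ℝ) • R.α v := by
  have hv := R.alpha_mem_posRoots v
  rw [← Finset.sum_erase_add _ _ hv, map_add]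
  rw [show (R.sRefl v) (∑ γ ∈ R.posRoots.erase (R.α v), γ)
      = ∑ γ ∈ R.posRoots.erase (R.α v), R.sRefl v γ from map_sum _ _ _]
  rw [R.sum_erase_sRefl v (fun γ => γ), R.sRefl_alpha_self, two_smul]
  abel

lemma sRefl_rho (v : Fin n) : R.sRefl v R.rho = R.rho - R.α v := by
  unfold rho
  rw [map_smul, R.sRefl_sum_posRoots, smul_sub, smul_smul]
  norm_num

lemma smul_alpha_cancel (v : Fin n) {a b : ℝ} (h : a • R.α v = b • R.α v) : a = b := by
  have h0 : (a - b) • R.α v = 0 := by rw [sub_smul, h, sub_self]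
  rcases smul_eq_zero.1 h0 with h1 | h1
  · linarith [sub_eq_zero.1 (by linarith [h1] : a - b = 0)]
  · exact absurd h1 (R.alpha_ne_zero v)

lemma corootForm_rho (v : Fin n) : corootForm (R.α v) R.rho = 1 := by
  have h := R.sRefl_rho v
  rw [R.sRefl_apply, corootForm_apply'] at *
  have h3 : rsPair R.rho (R.α v) • R.α v - R.α v = 0 := by
    calc rsPair R.rho (R.α v) • R.α v - R.α v
        = (R.rho - R.α v) - (R.rho - rsPair R.rho (R.α v) • R.α v) := by abel
      _ = 0 := by rw [h]; abel
  have h2 : rsPair R.rho (R.α v) • R.α v = (1:ℝ) • R.α v := by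
    rw [one_smul]
    exact sub_eq_zero.mp h3
  exact R.smul_alpha_cancel v h2

lemma inner_rho_alpha (v : Fin n) : (2:ℝ) * ⟪R.rho, R.α v⟫ = ⟪R.α v, R.α v⟫ := by
  have h := R.corootForm_rho v
  rw [corootForm_apply'] at h
  unfold rsPair at h
  have h2 : ⟪R.α v, R.α v⟫ ≠ 0 := R.inner_alpha_ne_zero v
  rw [div_eq_one_iff_eq h2] at h
  exact h

lemma inner_rho_pos {β : EuclideanSpace ℝ (Fin d)} (hβ : β ∈ R.posRoots) :
    0 < ⟪R.rho, β⟫ := by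
  obtain ⟨hβΦ, c, hc, hcpos⟩ := R.mem_posRoots.1 hβ
  rw [hc, inner_sum]
  have hterm : ∀ i, (0:ℝ) ≤ ⟪R.rho, (c i : ℝ) • R.α i⟫ := by
    intro i
    rw [real_inner_smul_right]
    have h1 : (0:ℝ) ≤ (c i : ℝ) := by exact_mod_cast hcpos i
    have h2 : (0:ℝ) < ⟪R.rho, R.α i⟫ := by
      have := R.inner_rho_alpha i
      have h3 := R.inner_self_pos_of_mem (R.α_mem i)
      linarith
    positivity
  -- some coefficient is nonzero
  have hex : ∃ i, c i ≠ 0 := by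
    by_contra hall
    push_neg at hall
    apply R.nonzero β hβΦ
    rw [hc]
    simp [hall]
  obtain ⟨i, hi⟩ := hex
  apply Finset.sum_pos' (fun i _ => hterm i) ⟨i, Finset.mem_univ i, ?_⟩
  rw [real_inner_smul_right]
  have h1 : (0:ℝ) < (c i : ℝ) := by
    have := hcpos i
    exact_mod_cast lt_of_le_of_ne this (Ne.symm hi)
  have h2 : (0:ℝ) < ⟪R.rho, R.α i⟫ := by
    have := R.inner_rho_alpha i
    have h3 := R.inner_self_pos_of_mem (R.α_mem i)
    linarith
  positivity

lemma posRoots_iff_inner {β : EuclideanSpace ℝ (Fin d)} (hβ : β ∈ R.Φ) :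
    β ∈ R.posRoots ↔ 0 < ⟪R.rho, β⟫ := by
  constructor
  · exact R.inner_rho_pos
  · intro h
    rcases R.pos_or_neg hβ with h1 | h1
    · exact h1
    · exfalso
      have := R.inner_rho_pos h1
      rw [inner_neg_right] at this
      linarith

end RootSystemBase
namespace RootSystemBase

variable {n d : ℕ} (R : RootSystemBase n d)

lemma rsCoroot_neg (γ : EuclideanSpace ℝ (Fin d)) : rsCoroot (-γ) = - rsCoroot γ := by
  unfold rsCoroot
  rw [inner_neg_neg, smul_neg]

lemma sRefl_rsCoroot (v : Fin n) (γ : EuclideanSpace ℝ (Fin d)) :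
    R.sRefl v (rsCoroot γ) = rsCoroot (R.sRefl v γ) := by
  unfold rsCoroot
  rw [map_smul, R.inner_sRefl]

/-- The sum of all positive coroots. -/
def RV : EuclideanSpace ℝ (Fin d) := ∑ γ ∈ R.posRoots, rsCoroot γ

lemma sRefl_RV (v : Fin n) : R.sRefl v R.RV = R.RV - (2:ℝ) • rsCoroot (R.α v) := by
  unfold RV
  have hv := R.alpha_mem_posRoots v
  rw [← Finset.sum_erase_add _ _ hv, map_add,
    show (R.sRefl v) (∑ γ ∈ R.posRoots.erase (R.α v), rsCoroot γ)
      = ∑ γ ∈ R.posRoots.erase (R.α v), R.sRefl v (rsCoroot γ) from map_sum _ _ _]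
  simp only [R.sRefl_rsCoroot]
  rw [R.sum_erase_sRefl v (fun γ => rsCoroot γ), R.sRefl_alpha_self, rsCoroot_neg, two_smul]
  abel

lemma inner_RV_alpha (v : Fin n) : ⟪R.RV, R.α v⟫ = 2 := by
  have h := R.sRefl_RV v
  rw [R.sRefl_apply] at h
  have h3 : rsPair R.RV (R.α v) • R.α v = ((2:ℝ) • rsCoroot (R.α v)) := by
    have h4 : rsPair R.RV (R.α v) • R.α v - (2:ℝ) • rsCoroot (R.α v) = 0 := by
      calc rsPair R.RV (R.α v) • R.α v - (2:ℝ) • rsCoroot (R.α v)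
          = (R.RV - (2:ℝ) • rsCoroot (R.α v)) - (R.RV - rsPair R.RV (R.α v) • R.α v) := by abel
        _ = 0 := by rw [h]; abel
    exact sub_eq_zero.mp h4
  have h2 : ⟪R.α v, R.α v⟫ ≠ 0 := R.inner_alpha_ne_zero v
  rw [show ((2:ℝ) • rsCoroot (R.α v)) = (2 * (2 / ⟪R.α v, R.α v⟫)) • R.α v by
    unfold rsCoroot; rw [smul_smul]] at h3
  have h5 := R.smul_alpha_cancel v h3
  unfold rsPair at h5
  set t : ℝ := ⟪R.α v, R.α v⟫ with htd
  set u : ℝ := ⟪R.RV, R.α v⟫ with hud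
  field_simp at h5
  linarith


lemma rsCoroot_sRefl_expand (v : Fin n) {δ : EuclideanSpace ℝ (Fin d)} (hδ : δ ≠ 0) :
    rsCoroot (R.sRefl v δ) = rsCoroot δ - rsPair (R.α v) δ • rsCoroot (R.α v) := by
  rw [← R.sRefl_rsCoroot, R.sRefl_apply]
  congr 1
  have hs : ⟪δ, δ⟫ ≠ 0 := fun hh => hδ ((inner_self_eq_zero (𝕜 := ℝ)).mp hh)
  have ht : ⟪R.α v, R.α v⟫ ≠ 0 := R.inner_alpha_ne_zero v
  unfold rsCoroot rsPair
  rw [smul_smul, real_inner_smul_left, real_inner_comm (R.α v) δ]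
  set s : ℝ := ⟪δ, δ⟫ with hsd
  set t : ℝ := ⟪R.α v, R.α v⟫ with htd
  set b : ℝ := ⟪R.α v, δ⟫ with hbd
  congr 1
  field_simp

/-- Integrality: the coroot of every positive root is an integral combination
of the simple coroots. -/
lemma coroot_int_combo_aux : ∀ m : ℕ, ∀ β ∈ R.posRoots, ∀ c : Fin n → ℤ,
    β = ∑ i, (c i : ℝ) • R.α i → (∀ i, 0 ≤ c i) → (∑ i, c i ≤ (m:ℤ)) →
    ∃ k : Fin n → ℤ, rsCoroot β = ∑ j, (k j : ℝ) • rsCoroot (R.α j) := by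
  intro m
  induction m with
  | zero =>
    intro β hβ c hc hcpos hsum
    exfalso
    apply R.nonzero β (R.posRoots_subset hβ)
    have hz : ∀ i, c i = 0 := by
      intro i
      have h1 : (0:ℤ) ≤ ∑ i, c i := Finset.sum_nonneg (fun i _ => hcpos i)
      have h2 : c i ≤ ∑ j, c j := Finset.single_le_sum (fun j _ => hcpos j) (Finset.mem_univ i)
      have h0 := hcpos i
      have hsum0 : ∑ j, c j ≤ 0 := by exact_mod_cast hsum
      omega
    rw [hc]; simp [hz]
  | succ m ih =>
    intro β hβ c hc hcpos hsum
    by_cases hsimple : ∃ v, β = R.α v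
    · obtain ⟨v, rfl⟩ := hsimple
      refine ⟨fun j => if j = v then 1 else 0, ?_⟩
      rw [Finset.sum_eq_single v]
      · simp
      · intro b _ hb; simp [hb]
      · simp
    · -- find v with c v > 0 and ⟪α v, β⟫ > 0
      have hβΦ := R.posRoots_subset hβ
      have hpos := R.inner_self_pos_of_mem hβΦ
      have hex : ∃ v, 0 < c v ∧ 0 < ⟪R.α v, β⟫ := by
        by_contra hall
        push_neg at hall
        have hrw : ⟪β, β⟫ = ∑ i, (c i : ℝ) * ⟪R.α i, β⟫ := by
          nth_rewrite 1 [hc]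
          rw [sum_inner]
          simp only [real_inner_smul_left]
        have hle : ⟪β, β⟫ ≤ 0 := by
          rw [hrw]
          apply Finset.sum_nonpos
          intro i _
          rcases lt_or_ge 0 (c i) with h1 | h1
          · have h2 := hall i h1
            have h3 : (0:ℝ) ≤ (c i : ℝ) := by exact_mod_cast (hcpos i)
            exact mul_nonpos_of_nonneg_of_nonpos h3 h2
          · have h2 : c i = 0 := le_antisymm h1 (hcpos i)
            simp [h2]
        linarith
      obtain ⟨v, hcv, hinner⟩ := hex
      obtain ⟨k, hk⟩ := R.crystallographic β hβΦ (R.α v) (R.α_mem v)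
      have hαv2 := R.inner_self_pos_of_mem (R.α_mem v)
      have hkpos : 0 < k := by
        have h1 : (0:ℝ) < rsPair β (R.α v) := by
          unfold rsPair
          rw [real_inner_comm] at hinner
          positivity
        rw [hk] at h1
        exact_mod_cast h1
      have hβne : β ≠ R.α v := fun h => hsimple ⟨v, h⟩
      set β' := R.sRefl v β with hβ'
      have hβ'pos : β' ∈ R.posRoots := R.sRefl_mem_posRoots v hβ hβne
      -- coefficients of β'
      have hrep : β' = ∑ i, ((c i - if i = v then k else 0 : ℤ) : ℝ) • R.α i := by
        rw [hβ', R.sRefl_apply, hk, hc]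
        push_cast
        simp only [sub_smul, Finset.sum_sub_distrib]
        congr 1
        rw [Finset.sum_eq_single v]
        · simp
        · intro b _ hb; simp [hb]
        · simp
      have hc'pos : ∀ i, 0 ≤ c i - (if i = v then k else 0) := by
        obtain ⟨_, e, he, hepos⟩ := R.mem_posRoots.1 hβ'pos
        have hce : e = fun i => c i - if i = v then k else 0 := by
          apply R.coeff_unique_int
          rw [← he, ← hrep]
        intro i
        have := hepos i
        rw [hce] at this
        exact this
      have hsum' : ∑ i, (c i - if i = v then k else 0) ≤ (m:ℤ) := by
        rw [Finset.sum_sub_distrib, Finset.sum_ite_eq' Finset.univ v (fun _ => k)]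
        simp only [Finset.mem_univ, if_true]
        push_cast at hsum ⊢
        omega
      obtain ⟨k', hk'⟩ := ih β' hβ'pos _ hrep hc'pos hsum'
      -- β = s_v β', so coroot β = s_v (coroot β')
      obtain ⟨k2, hk2⟩ := R.crystallographic (R.α v) (R.α_mem v) β' (R.posRoots_subset hβ'pos)
      refine ⟨fun j => k' j - if j = v then k2 else 0, ?_⟩
      have hβ'ne : β' ≠ 0 := R.nonzero β' (R.posRoots_subset hβ'pos)
      have hβcor : rsCoroot β = rsCoroot β' - rsPair (R.α v) β' • rsCoroot (R.α v) := by
        rw [← R.rsCoroot_sRefl_expand v hβ'ne, hβ', R.sRefl_sRefl]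
      rw [hβcor, hk', hk2]
      push_cast
      simp only [sub_smul, Finset.sum_sub_distrib]
      congr 1
      rw [Finset.sum_eq_single v (f := fun j => (if j = v then (k2:ℝ) else 0) • rsCoroot (R.α j))]
      · simp
      · intro b _ hb; simp [hb]
      · simp

lemma coroot_int_combo {β : EuclideanSpace ℝ (Fin d)} (hβ : β ∈ R.posRoots) :
    ∃ k : Fin n → ℤ, rsCoroot β = ∑ j, (k j : ℝ) • rsCoroot (R.α j) := by
  obtain ⟨hβΦ, c, hc, hcpos⟩ := R.mem_posRoots.1 hβ
  exact R.coroot_int_combo_aux (∑ i, c i).toNat β hβ c hc hcpos (by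
    rw [Int.toNat_of_nonneg (Finset.sum_nonneg (fun i _ => hcpos i))])

end RootSystemBase
namespace RootSystemBase

variable {n d : ℕ} (R : RootSystemBase n d)

lemma linEquiv_mul_apply (e₁ e₂ : EuclideanSpace ℝ (Fin d) ≃ₗ[ℝ] EuclideanSpace ℝ (Fin d))
    (x : EuclideanSpace ℝ (Fin d)) : (e₁ * e₂) x = e₁ (e₂ x) := rfl

lemma linEquiv_one_apply (x : EuclideanSpace ℝ (Fin d)) :
    (1 : EuclideanSpace ℝ (Fin d) ≃ₗ[ℝ] EuclideanSpace ℝ (Fin d)) x = x := rfl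

/-- The real vector represented by a chip configuration. -/
def xOf (c : Fin n → ℤ) : EuclideanSpace ℝ (Fin d) := ∑ u, ((c u : ℝ)) • R.α u

lemma cartan_cast (u v : Fin n) : ((R.cartan u v : ℤ) : ℝ) = rsPair (R.α u) (R.α v) := by
  obtain ⟨k, hk⟩ := R.crystallographic (R.α u) (R.α_mem u) (R.α v) (R.α_mem v)
  unfold cartan
  rw [hk, Int.floor_intCast]

lemma corootForm_xOf (c : Fin n → ℤ) (v : Fin n) :
    corootForm (R.α v) (R.xOf c) = ∑ u, (c u : ℝ) * rsPair (R.α u) (R.α v) := by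
  unfold xOf
  rw [map_sum]
  apply Finset.sum_congr rfl
  intro u _
  rw [map_smul, corootForm_apply']
  rfl

lemma chipBound_identity (c : Fin n → ℤ) (v : Fin n) :
    ((R.chipBound Finset.univ c v : ℤ) : ℝ) - 2 * (c v : ℝ)
      = 1 - corootForm (R.α v) (R.xOf c) := by
  unfold chipBound
  rw [if_pos (Finset.mem_univ v)]
  push_cast
  rw [R.corootForm_xOf,
    ← Finset.add_sum_erase _ (fun u => (c u : ℝ) * rsPair (R.α u) (R.α v)) (Finset.mem_univ v),
    rsPair_self (R.alpha_ne_zero v)]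
  have hsum : ∑ u ∈ Finset.univ.erase v, (-(R.cartan u v : ℝ)) * (c u : ℝ)
      = - ∑ u ∈ Finset.univ.erase v, (c u : ℝ) * rsPair (R.α u) (R.α v) := by
    rw [← Finset.sum_neg_distrib]
    refine Finset.sum_congr rfl (fun u _ => ?_)
    rw [← R.cartan_cast u v]
    ring
  rw [hsum]
  ring

lemma validFrom_cons {I : Finset (Fin n)} {c : Fin n → ℤ} {v : Fin n} {l : List (Fin n)} :
    R.ValidFrom I c (v :: l) ↔ R.Sad I c v ∧ R.ValidFrom I (R.fire I c v) l := Iff.rfl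

lemma validFrom_append {I : Finset (Fin n)} (l₁ l₂ : List (Fin n)) :
    ∀ c, R.ValidFrom I c (l₁ ++ l₂) ↔
      R.ValidFrom I c l₁ ∧ R.ValidFrom I (List.foldl (R.fire I) c l₁) l₂ := by
  induction l₁ with
  | nil =>
    intro c
    simp only [List.nil_append, List.foldl_nil]
    exact ⟨fun h => ⟨trivial, h⟩, fun h => h.2⟩
  | cons v t ih =>
    intro c
    rw [List.cons_append, R.validFrom_cons, R.validFrom_cons, ih (R.fire I c v),
      List.foldl_cons, and_assoc]

lemma play_append_singleton (I : Finset (Fin n)) (l : List (Fin n)) (v : Fin n) :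
    R.play I (l ++ [v]) = R.fire I (R.play I l) v := by
  unfold play
  rw [List.foldl_append, List.foldl_cons, List.foldl_nil]

lemma xOf_fire (I : Finset (Fin n)) (c : Fin n → ℤ) (v : Fin n) :
    R.xOf (R.fire I c v)
      = R.xOf c + (((R.chipBound I c v - 2 * c v : ℤ) : ℝ)) • R.α v := by
  unfold xOf fire
  rw [← Finset.add_sum_erase _
      (fun u => ((Function.update c v (R.chipBound I c v - c v) u : ℤ) : ℝ) • R.α u)
      (Finset.mem_univ v),
    ← Finset.add_sum_erase _ (fun u => ((c u : ℤ) : ℝ) • R.α u) (Finset.mem_univ v)]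
  have hs : ∑ u ∈ Finset.univ.erase v,
      ((Function.update c v (R.chipBound I c v - c v) u : ℤ) : ℝ) • R.α u
      = ∑ u ∈ Finset.univ.erase v, ((c u : ℤ) : ℝ) • R.α u := by
    refine Finset.sum_congr rfl (fun u hu => ?_)
    rw [Function.update_of_ne (Finset.ne_of_mem_erase hu)]
  rw [hs, Function.update_self]
  push_cast
  rw [sub_smul, sub_smul, two_mul, add_smul]
  abel

lemma wordProd_nil : R.wordProd [] = 1 := rfl

lemma wordProd_cons (v : Fin n) (l : List (Fin n)) :
    R.wordProd (v :: l) = R.sRefl v * R.wordProd l := by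
  unfold wordProd
  rw [List.map_cons, List.prod_cons]

lemma wordProd_append_singleton (l : List (Fin n)) (v : Fin n) :
    R.wordProd (l ++ [v]) = R.wordProd l * R.sRefl v := by
  unfold wordProd
  rw [List.map_append, List.prod_append, List.map_singleton, List.prod_singleton]

lemma seqProd_eq_wordProd_reverse (l : List (Fin n)) :
    R.seqProd l = R.wordProd l.reverse := rfl

lemma seqProd_nil : R.seqProd [] = 1 := rfl

lemma seqProd_append_singleton (l : List (Fin n)) (v : Fin n) :
    R.seqProd (l ++ [v]) = R.sRefl v * R.seqProd l := by
  rw [seqProd_eq_wordProd_reverse, seqProd_eq_wordProd_reverse, List.reverse_append]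
  simp only [List.reverse_cons, List.reverse_nil, List.nil_append, List.singleton_append]
  exact R.wordProd_cons v l.reverse

lemma wordProd_mem (l : List (Fin n)) {β : EuclideanSpace ℝ (Fin d)} (hβ : β ∈ R.Φ) :
    R.wordProd l β ∈ R.Φ := by
  induction l generalizing β with
  | nil => rwa [wordProd_nil, linEquiv_one_apply]
  | cons v t ih =>
    rw [R.wordProd_cons, linEquiv_mul_apply]
    exact R.sRefl_mem v (ih hβ)

lemma wordProd_inner (l : List (Fin n)) (x y : EuclideanSpace ℝ (Fin d)) :
    ⟪R.wordProd l x, R.wordProd l y⟫ = ⟪x, y⟫ := by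
  induction l generalizing x y with
  | nil => rw [wordProd_nil, linEquiv_one_apply, linEquiv_one_apply]
  | cons v t ih =>
    rw [R.wordProd_cons, linEquiv_mul_apply, linEquiv_mul_apply, R.inner_sRefl]
    exact ih x y

lemma wordProd_seqProd (l : List (Fin n)) (x : EuclideanSpace ℝ (Fin d)) :
    R.wordProd l (R.seqProd l x) = x := by
  induction l generalizing x with
  | nil => rfl
  | cons v t ih =>
    rw [R.wordProd_cons, R.seqProd_eq_wordProd_reverse, List.reverse_cons,
      R.wordProd_append_singleton, linEquiv_mul_apply, linEquiv_mul_apply,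
      ← R.seqProd_eq_wordProd_reverse, ih ((R.sRefl v) x), R.sRefl_sRefl]

lemma seqProd_wordProd (l : List (Fin n)) (x : EuclideanSpace ℝ (Fin d)) :
    R.seqProd l (R.wordProd l x) = x := by
  induction l generalizing x with
  | nil => rfl
  | cons v t ih =>
    rw [R.wordProd_cons, R.seqProd_eq_wordProd_reverse, List.reverse_cons,
      R.wordProd_append_singleton, linEquiv_mul_apply, linEquiv_mul_apply,
      ← R.seqProd_eq_wordProd_reverse, R.sRefl_sRefl, ih]

lemma seqProd_mem (l : List (Fin n)) {β : EuclideanSpace ℝ (Fin d)} (hβ : β ∈ R.Φ) :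
    R.seqProd l β ∈ R.Φ := by
  rw [seqProd_eq_wordProd_reverse]
  exact R.wordProd_mem _ hβ

lemma inner_seqProd_left (l : List (Fin n)) (x y : EuclideanSpace ℝ (Fin d)) :
    ⟪R.seqProd l x, y⟫ = ⟪x, R.wordProd l y⟫ := by
  rw [← R.wordProd_inner l (R.seqProd l x) y, R.wordProd_seqProd]

end RootSystemBase
namespace RootSystemBase

variable {n d : ℕ} (R : RootSystemBase n d)

/-- The inversion set of the word associated to a firing sequence. -/
def invSet (l : List (Fin n)) : Finset (EuclideanSpace ℝ (Fin d)) :=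
  R.posRoots.filter (fun γ => R.wordProd l γ ∉ R.posRoots)

lemma mem_invSet {l : List (Fin n)} {γ : EuclideanSpace ℝ (Fin d)} :
    γ ∈ R.invSet l ↔ γ ∈ R.posRoots ∧ R.wordProd l γ ∉ R.posRoots := Finset.mem_filter

lemma invSet_subset (l : List (Fin n)) : R.invSet l ⊆ R.posRoots :=
  Finset.filter_subset _ _

lemma neg_not_posRoot {β : EuclideanSpace ℝ (Fin d)} (hβ : β ∈ R.posRoots) :
    -β ∉ R.posRoots := fun h => R.not_pos_and_neg hβ (by simpa using h)

lemma key_step {l : List (Fin n)} {v : Fin n}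
    (hx : R.xOf (R.play Finset.univ l) = R.rho - R.seqProd l R.rho)
    (hsad : R.Sad Finset.univ (R.play Finset.univ l) v) :
    ((R.chipBound Finset.univ (R.play Finset.univ l) v
        - 2 * (R.play Finset.univ l) v : ℤ) : ℝ)
      = corootForm (R.α v) (R.seqProd l R.rho)
    ∧ R.wordProd l (R.α v) ∈ R.posRoots := by
  set c := R.play Finset.univ l with hc
  have hkey : ((R.chipBound Finset.univ c v - 2 * c v : ℤ) : ℝ)
      = corootForm (R.α v) (R.seqProd l R.rho) := by
    push_cast
    rw [R.chipBound_identity c v, hx, map_sub, R.corootForm_rho]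
    ring
  refine ⟨hkey, ?_⟩
  have hposZ : (0:ℤ) < R.chipBound Finset.univ c v - 2 * c v := by
    have := hsad
    unfold Sad at this
    omega
  have hposR : (0:ℝ) < corootForm (R.α v) (R.seqProd l R.rho) := by
    rw [← hkey]
    exact_mod_cast hposZ
  have hα2 := R.inner_self_pos_of_mem (R.α_mem v)
  have hinn : (0:ℝ) < ⟪R.seqProd l R.rho, R.α v⟫ := by
    rw [corootForm_apply'] at hposR
    unfold rsPair at hposR
    have h3 : 2 * ⟪R.seqProd l R.rho, R.α v⟫
        = 2 * ⟪R.seqProd l R.rho, R.α v⟫ / ⟪R.α v, R.α v⟫ * ⟪R.α v, R.α v⟫ :=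
      (div_mul_cancel₀ _ (ne_of_gt hα2)).symm
    have h4 := mul_pos hposR hα2
    linarith
  rw [R.inner_seqProd_left] at hinn
  exact (R.posRoots_iff_inner (R.wordProd_mem l (R.α_mem v))).2 hinn

lemma main_invariant : ∀ l : List (Fin n), R.Valid Finset.univ l →
    R.xOf (R.play Finset.univ l) = R.rho - R.seqProd l R.rho ∧
    l.length = (R.invSet l).card := by
  intro l
  induction l using List.reverseRecOn with
  | nil =>
    intro _
    constructor
    · show R.xOf 0 = R.rho - R.seqProd [] R.rho
      rw [R.seqProd_nil, linEquiv_one_apply, sub_self]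
      unfold xOf
      simp
    · rw [show (R.invSet [] : Finset _) = ∅ from ?_]
      · simp
      · apply Finset.filter_false_of_mem
        intro γ hγ
        rw [R.wordProd_nil, linEquiv_one_apply]
        simp [hγ]
  | append_singleton l v ih =>
    intro hval
    have hsplit := (R.validFrom_append l [v] 0).1 hval
    have hvl : R.Valid Finset.univ l := hsplit.1
    have hsad : R.Sad Finset.univ (R.play Finset.univ l) v := hsplit.2.1
    obtain ⟨hx, hlen⟩ := ih hvl
    obtain ⟨hkey, hupos⟩ := R.key_step hx hsad
    constructor
    · rw [R.play_append_singleton, R.xOf_fire, hx, hkey, R.seqProd_append_singleton,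
        linEquiv_mul_apply, R.sRefl_apply, ← corootForm_apply']
      abel
    · -- counting
      have hwapp : ∀ γ, R.wordProd (l ++ [v]) γ = R.wordProd l (R.sRefl v γ) := by
        intro γ
        rw [R.wordProd_append_singleton, linEquiv_mul_apply]
      have hαmemN' : R.α v ∈ R.invSet (l ++ [v]) := by
        rw [R.mem_invSet, hwapp, R.sRefl_alpha_self, map_neg]
        exact ⟨R.alpha_mem_posRoots v, R.neg_not_posRoot hupos⟩
      have hαnotN : R.α v ∉ R.invSet l := by
        rw [R.mem_invSet]
        push_neg
        intro _
        simpa using hupos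
      have hcard : ((R.invSet (l ++ [v])).erase (R.α v)).card
          = ((R.invSet l).erase (R.α v)).card := by
        apply Finset.card_nbij' (fun γ => R.sRefl v γ) (fun γ => R.sRefl v γ)
        · intro γ hγ
          obtain ⟨hne, hγ'⟩ := Finset.mem_erase.1 hγ
          obtain ⟨hγpos, hγcond⟩ := R.mem_invSet.1 hγ'
          have hmem := R.sRefl_mem_erase v (Finset.mem_erase.2 ⟨hne, hγpos⟩)
          obtain ⟨hne2, hpos2⟩ := Finset.mem_erase.1 hmem
          refine Finset.mem_erase.2 ⟨hne2, R.mem_invSet.2 ⟨hpos2, ?_⟩⟩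
          rwa [hwapp] at hγcond
        · intro γ hγ
          obtain ⟨hne, hγ'⟩ := Finset.mem_erase.1 hγ
          obtain ⟨hγpos, hγcond⟩ := R.mem_invSet.1 hγ'
          have hmem := R.sRefl_mem_erase v (Finset.mem_erase.2 ⟨hne, hγpos⟩)
          obtain ⟨hne2, hpos2⟩ := Finset.mem_erase.1 hmem
          refine Finset.mem_erase.2 ⟨hne2, R.mem_invSet.2 ⟨hpos2, ?_⟩⟩
          rw [hwapp, R.sRefl_sRefl]
          exact hγcond
        · intro γ _
          exact R.sRefl_sRefl v γ
        · intro γ _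
          exact R.sRefl_sRefl v γ
      rw [List.length_append, List.length_singleton, hlen,
        ← Finset.card_erase_add_one hαmemN', hcard, Finset.erase_eq_of_notMem hαnotN]

end RootSystemBase
namespace RootSystemBase

variable {n d : ℕ} (R : RootSystemBase n d)

lemma length_le_of_valid {l : List (Fin n)} (h : R.Valid Finset.univ l) :
    l.length ≤ R.posRoots.card := by
  rw [(R.main_invariant l h).2]
  exact Finset.card_le_card (R.invSet_subset l)

lemma exists_maximalSeq : ∃ l : List (Fin n), R.MaximalSeq Finset.univ l := by
  set S : Set ℕ := {m | ∃ l : List (Fin n), R.Valid Finset.univ l ∧ l.length = m} with hS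
  have hne : S.Nonempty := ⟨0, [], trivial, rfl⟩
  have hbdd : BddAbove S := by
    refine ⟨R.posRoots.card, fun m hm => ?_⟩
    obtain ⟨l, hl, rfl⟩ := hm
    exact R.length_le_of_valid hl
  obtain ⟨l, hl, hlen⟩ := Nat.sSup_mem hne hbdd
  refine ⟨l, hl, fun v hsad => ?_⟩
  have hval' : R.Valid Finset.univ (l ++ [v]) := by
    rw [Valid, R.validFrom_append]
    exact ⟨hl, hsad, trivial⟩
  have hmem : l.length + 1 ∈ S := ⟨l ++ [v], hval', by simp⟩
  have := le_csSup hbdd hmem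
  rw [hlen] at this
  omega

lemma wordProd_alpha_not_pos {l : List (Fin n)} (h : R.MaximalSeq Finset.univ l) (v : Fin n) :
    R.wordProd l (R.α v) ∉ R.posRoots := by
  obtain ⟨hval, hnot⟩ := h
  obtain ⟨hx, -⟩ := R.main_invariant l hval
  set c := R.play Finset.univ l with hc
  have hnp : R.chipBound Finset.univ c v - 2 * c v ≤ 0 := by
    have := hnot v
    unfold Sad at this
    omega
  have hkey : ((R.chipBound Finset.univ c v - 2 * c v : ℤ) : ℝ)
      = corootForm (R.α v) (R.seqProd l R.rho) := by
    push_cast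
    rw [R.chipBound_identity c v, hx, map_sub, R.corootForm_rho]
    ring
  have hle : corootForm (R.α v) (R.seqProd l R.rho) ≤ 0 := by
    rw [← hkey]
    exact_mod_cast hnp
  have hα2 := R.inner_self_pos_of_mem (R.α_mem v)
  have hinle : ⟪R.seqProd l R.rho, R.α v⟫ ≤ 0 := by
    rw [corootForm_apply'] at hle
    unfold rsPair at hle
    have h3 : 2 * ⟪R.seqProd l R.rho, R.α v⟫
        = 2 * ⟪R.seqProd l R.rho, R.α v⟫ / ⟪R.α v, R.α v⟫ * ⟪R.α v, R.α v⟫ :=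
      (div_mul_cancel₀ _ (ne_of_gt hα2)).symm
    nlinarith
  rw [R.inner_seqProd_left] at hinle
  intro hpos
  have := R.inner_rho_pos hpos
  linarith

lemma wordProd_posRoot_not_pos {l : List (Fin n)} (h : R.MaximalSeq Finset.univ l)
    {γ : EuclideanSpace ℝ (Fin d)} (hγ : γ ∈ R.posRoots) :
    R.wordProd l γ ∉ R.posRoots := by
  intro hpos
  have h1 := R.inner_rho_pos hpos
  obtain ⟨hγΦ, cc, hcc, hccpos⟩ := R.mem_posRoots.1 hγ
  have h2 : ⟪R.rho, R.wordProd l γ⟫ ≤ 0 := by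
    rw [hcc, map_sum, inner_sum]
    apply Finset.sum_nonpos
    intro u _
    rw [map_smul, real_inner_smul_right]
    have h3 : R.wordProd l (R.α u) ∉ R.posRoots := R.wordProd_alpha_not_pos h u
    have h4 : R.wordProd l (R.α u) ∈ R.Φ := R.wordProd_mem l (R.α_mem u)
    have h5 : -(R.wordProd l (R.α u)) ∈ R.posRoots := (R.pos_or_neg h4).resolve_left h3
    have h6 := R.inner_rho_pos h5
    rw [inner_neg_right] at h6
    have h7 : (0:ℝ) ≤ (cc u : ℝ) := by exact_mod_cast hccpos u
    nlinarith
  linarith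

lemma maximal_xOf {l : List (Fin n)} (h : R.MaximalSeq Finset.univ l) :
    R.xOf (R.play Finset.univ l) = ∑ γ ∈ R.posRoots, γ := by
  have hval := h.1
  obtain ⟨hx, -⟩ := R.main_invariant l hval
  -- the word maps the positive roots bijectively onto the negative roots
  have hneg2 : ∀ γ ∈ R.posRoots, -(R.wordProd l γ) ∈ R.posRoots := by
    intro γ hγ
    exact ((R.pos_or_neg (R.wordProd_mem l (R.posRoots_subset hγ))).resolve_left
      (R.wordProd_posRoot_not_pos h hγ))
  have hψ : ∀ δ ∈ R.posRoots, -(R.seqProd l δ) ∈ R.posRoots := by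
    intro δ hδ
    have hδΦ := R.posRoots_subset hδ
    have hspΦ : R.seqProd l δ ∈ R.Φ := R.seqProd_mem l hδΦ
    rcases R.pos_or_neg hspΦ with h1 | h1
    · exfalso
      have := R.wordProd_posRoot_not_pos h h1
      rw [R.wordProd_seqProd] at this
      exact this hδ
    · exact h1
  have hsum : ∑ γ ∈ R.posRoots, -(R.wordProd l γ) = ∑ γ ∈ R.posRoots, γ := by
    apply Finset.sum_nbij' (fun γ => -(R.wordProd l γ)) (fun δ => -(R.seqProd l δ))
    · exact hneg2
    · exact hψ
    · intro γ _
      rw [map_neg, neg_neg, R.seqProd_wordProd]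
    · intro δ _
      rw [map_neg, neg_neg, R.wordProd_seqProd]
    · intro γ _
      rfl
  have husum : R.wordProd l (∑ γ ∈ R.posRoots, γ) = -(∑ γ ∈ R.posRoots, γ) := by
    rw [map_sum]
    have h2 : -∑ γ ∈ R.posRoots, R.wordProd l γ = ∑ γ ∈ R.posRoots, γ := by
      rw [← Finset.sum_neg_distrib]
      exact hsum
    exact neg_eq_iff_eq_neg.mp h2
  have hsp : R.seqProd l R.rho = - R.rho := by
    have h1 : R.seqProd l (R.wordProd l (∑ γ ∈ R.posRoots, γ))
        = R.seqProd l (-(∑ γ ∈ R.posRoots, γ)) := by rw [husum]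
    rw [R.seqProd_wordProd, map_neg] at h1
    have h2 : R.seqProd l (∑ γ ∈ R.posRoots, γ) = -(∑ γ ∈ R.posRoots, γ) :=
      neg_eq_iff_eq_neg.mp h1.symm
    unfold rho
    rw [map_smul, h2, smul_neg]
  rw [hx, hsp, sub_neg_eq_add]
  unfold rho
  rw [← two_smul ℝ, smul_smul]
  norm_num

lemma corootCoeffs_spec {γ : EuclideanSpace ℝ (Fin d)} (hγ : γ ∈ R.posRoots) :
    rsCoroot γ = ∑ j, ((R.corootCoeffs (rsCoroot γ) j : ℤ) : ℝ) • rsCoroot (R.α j) := by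
  unfold corootCoeffs
  rw [dif_pos (R.coroot_int_combo hγ)]
  exact (R.coroot_int_combo hγ).choose_spec

lemma inner_rsCoroot_alpha_rho (j : Fin n) : ⟪rsCoroot (R.α j), R.rho⟫ = 1 := by
  have h := R.corootForm_rho j
  rw [corootForm_apply'] at h
  unfold rsPair at h
  unfold rsCoroot
  rw [real_inner_smul_left, real_inner_comm R.rho (R.α j), div_mul_eq_mul_div]
  exact h

lemma htI_cast {γ : EuclideanSpace ℝ (Fin d)} (hγ : γ ∈ R.posRoots) :
    ((R.htI Finset.univ (rsCoroot γ) : ℤ) : ℝ) = ⟪rsCoroot γ, R.rho⟫ := by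
  have hspec := R.corootCoeffs_spec hγ
  rw [htI]
  push_cast
  conv_rhs => rw [hspec]
  rw [sum_inner]
  apply Finset.sum_congr rfl
  intro j _
  rw [real_inner_smul_left, R.inner_rsCoroot_alpha_rho, mul_one]

end RootSystemBase
/-- If all vertices are modified (`I = {1, …, n}`), the total number of chips
of the unique final configuration equals the sum of the heights of all positive coroots. -/
theorem statement5 {n d : ℕ} (R : RootSystemBase n d) :
    (∃ N : ℕ, ∀ l : List (Fin n), R.Valid Finset.univ l → l.length ≤ N) ∧
    ∃ cfin : Fin n → ℤ,
      (∃ l : List (Fin n), R.MaximalSeq Finset.univ l) ∧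
      (∀ l : List (Fin n), R.MaximalSeq Finset.univ l → R.play Finset.univ l = cfin) ∧
      ∑ v, cfin v = ∑ γ ∈ R.posRoots, R.htI Finset.univ (rsCoroot γ) := by
  obtain ⟨l₀, hl₀⟩ := R.exists_maximalSeq
  refine ⟨⟨R.posRoots.card, fun l hl => R.length_le_of_valid hl⟩,
    R.play Finset.univ l₀, ⟨l₀, hl₀⟩, ?_, ?_⟩
  · intro l hl
    apply R.coeff_unique_int
    have h1 := R.maximal_xOf hl
    have h2 := R.maximal_xOf hl₀
    unfold RootSystemBase.xOf at h1 h2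
    rw [h1, h2]
  · set cfin := R.play Finset.univ l₀ with hcfin
    have hx : R.xOf cfin = ∑ γ ∈ R.posRoots, γ := R.maximal_xOf hl₀
    have hcast : ((∑ v, cfin v : ℤ) : ℝ)
        = ((∑ γ ∈ R.posRoots, R.htI Finset.univ (rsCoroot γ) : ℤ) : ℝ) := by
      have h1 : ⟪R.xOf cfin, R.RV⟫ = ∑ v, (cfin v : ℝ) * 2 := by
        unfold RootSystemBase.xOf
        rw [sum_inner]
        refine Finset.sum_congr rfl (fun v _ => ?_)
        rw [real_inner_smul_left, real_inner_comm R.RV (R.α v), R.inner_RV_alpha]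
      have h2 : ⟪R.xOf cfin, R.RV⟫ = 2 * ⟪R.RV, R.rho⟫ := by
        rw [hx]
        have hSg : (∑ γ ∈ R.posRoots, γ) = (2:ℝ) • R.rho := by
          unfold RootSystemBase.rho
          rw [smul_smul]
          norm_num
        rw [hSg, real_inner_smul_left, real_inner_comm R.RV R.rho]
      have h3 : ⟪R.RV, R.rho⟫ = ∑ γ ∈ R.posRoots, ⟪rsCoroot γ, R.rho⟫ := by
        unfold RootSystemBase.RV
        rw [sum_inner]
      have h4 : ∑ γ ∈ R.posRoots, ⟪rsCoroot γ, R.rho⟫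
          = ∑ γ ∈ R.posRoots, ((R.htI Finset.univ (rsCoroot γ) : ℤ) : ℝ) :=
        Finset.sum_congr rfl (fun γ hγ => (R.htI_cast hγ).symm)
      have h5 := h1.symm.trans h2
      rw [h3, h4, ← Finset.sum_mul] at h5
      push_cast
      linarith
    exact_mod_cast hcast
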